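/- Let a countable group G act by homeomorphisms on a second countable Hausdorff space X. Suppose there exist a countable base 𝒰 for X and a compact set K ⊆ X such that the G-algebra generated by 𝒰 ∪ {K} admits a finitely additive G-invariant probability measure ρ with ρ(K) > 0. Then there exists a countably additive G-invariant Borel probability measure on X. -/

import Mathlib

open scoped ENNReal Pointwise

/-- The `G`-algebra of sets generated by a family `S`: the smallest algebra of subsets
of `X` containing `S` and closed under the `G`-action. -/
inductive GSetAlg (G : Type*) {X : Type*} [Group G] [MulAction G X] (S : Set (Set X)) :
    Set X → Prop
  | basic : ∀ A ∈ S, GSetAlg G S A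
  | empty : GSetAlg G S ∅
  | compl : ∀ A, GSetAlg G S A → GSetAlg G S Aᶜ
  | union : ∀ A B, GSetAlg G S A → GSetAlg G S B → GSetAlg G S (A ∪ B)
  | smul : ∀ (g : G) (A), GSetAlg G S A → GSetAlg G S (g • A)

section Aux

variable {G X : Type*} [Group G] [MulAction G X] {S : Set (Set X)}

lemma GSetAlg.univ : GSetAlg G S Set.univ := by
  simpa using GSetAlg.compl ∅ GSetAlg.empty

lemma GSetAlg.inter {A B : Set X} (hA : GSetAlg G S A) (hB : GSetAlg G S B) :
    GSetAlg G S (A ∩ B) := by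
  have := GSetAlg.compl _ (GSetAlg.union _ _ (GSetAlg.compl _ hA) (GSetAlg.compl _ hB))
  simpa [Set.compl_union] using this

lemma GSetAlg.diff {A B : Set X} (hA : GSetAlg G S A) (hB : GSetAlg G S B) :
    GSetAlg G S (A \ B) := by
  simpa [Set.diff_eq] using hA.inter (GSetAlg.compl _ hB)

lemma GSetAlg.sUnion_finite {T : Set (Set X)} (hT : T.Finite)
    (h : ∀ A ∈ T, GSetAlg G S A) : GSetAlg G S (⋃₀ T) := by
  refine Set.Finite.induction_on (motive := fun T _ => (∀ A ∈ T, GSetAlg G S A) → GSetAlg G S (⋃₀ T))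
    T hT (fun _ => by simpa using (GSetAlg.empty : GSetAlg G S ∅)) ?_ h
  intro A T hAT hTfin ih h'
  rw [Set.sUnion_insert]
  exact GSetAlg.union _ _ (h' _ (Set.mem_insert _ _))
    (ih fun B hB => h' B (Set.mem_insert_of_mem _ hB))

lemma exists_gsetalg_open [TopologicalSpace X] {𝒰 : Set (Set X)}
    (h𝒰b : TopologicalSpace.IsTopologicalBasis 𝒰) (hsub : 𝒰 ⊆ S) {C V : Set X}
    (hC : IsCompact C) (hV : IsOpen V) (hCV : C ⊆ V) :
    ∃ W, GSetAlg G S W ∧ IsOpen W ∧ C ⊆ W ∧ W ⊆ V := by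
  have hcov0 : C ⊆ ⋃ U ∈ {U | U ∈ 𝒰 ∧ U ⊆ V}, id U := by
    intro x hx
    obtain ⟨U, hU, hxU, hUV⟩ := h𝒰b.exists_subset_of_mem_open (hCV hx) hV
    exact Set.mem_biUnion (⟨hU, hUV⟩ : U ∈ {U | U ∈ 𝒰 ∧ U ⊆ V}) hxU
  obtain ⟨b', hb'sub, hb'fin, hcover⟩ := hC.elim_finite_subcover_image
    (b := {U | U ∈ 𝒰 ∧ U ⊆ V}) (c := id) (fun U hU => h𝒰b.isOpen hU.1) hcov0
  refine ⟨⋃₀ b', GSetAlg.sUnion_finite hb'fin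
    (fun A hA => GSetAlg.basic _ (hsub (hb'sub hA).1)),
    isOpen_sUnion (fun A hA => h𝒰b.isOpen (hb'sub hA).1), ?_, ?_⟩
  · rwa [Set.sUnion_eq_biUnion]
  · exact Set.sUnion_subset fun A hA => (hb'sub hA).2

lemma le_sInf_add_sInf' {s t : Set ℝ≥0∞} {a : ℝ≥0∞}
    (h : ∀ x ∈ s, ∀ y ∈ t, a ≤ x + y) : a ≤ sInf s + sInf t := by
  rw [ENNReal.sInf_add]
  refine le_iInf₂ fun x hx => ?_
  rw [add_comm, ENNReal.sInf_add]
  refine le_iInf₂ fun y hy => ?_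
  rw [add_comm]
  exact h x hx y hy

end Aux

/-- Let a countable group `G` act by homeomorphisms on a second
countable Hausdorff space `X`. Suppose there are a countable base `𝒰` and a compact set
`K ⊆ X` such that the `G`-algebra generated by `𝒰 ∪ {K}` carries a finitely additive
`G`-invariant probability measure `ρ` with `ρ(K) > 0`. Then there exists a countably
additive `G`-invariant Borel probability measure on `X`. -/
theorem stmt_12 {G X : Type*} [Group G] [Countable G] [TopologicalSpace X] [T2Space X]
    [SecondCountableTopology X] [MeasurableSpace X] [BorelSpace X] [MulAction G X]
    (hcont : ∀ g : G, Continuous fun x : X => g • x)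
    (𝒰 : Set (Set X)) (h𝒰c : 𝒰.Countable)
    (h𝒰b : TopologicalSpace.IsTopologicalBasis 𝒰)
    (K : Set X) (hK : IsCompact K)
    (ρ : Set X → ℝ≥0∞) (hρ1 : ρ Set.univ = 1)
    (hρadd : ∀ A B : Set X, GSetAlg G (𝒰 ∪ {K}) A → GSetAlg G (𝒰 ∪ {K}) B →
      Disjoint A B → ρ (A ∪ B) = ρ A + ρ B)
    (hρinv : ∀ (g : G) (A : Set X), GSetAlg G (𝒰 ∪ {K}) A → ρ (g • A) = ρ A)
    (hρK : 0 < ρ K) :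
    ∃ μ : MeasureTheory.Measure X, MeasureTheory.IsProbabilityMeasure μ ∧
      ∀ (g : G) (S : Set X), μ (g • S) = μ S := by
  classical
  haveI : ContinuousConstSMul G X := ⟨hcont⟩
  set 𝒮 : Set (Set X) := 𝒰 ∪ {K} with h𝒮
  have hKalg : GSetAlg G 𝒮 K := GSetAlg.basic K (Set.mem_union_right _ rfl)
  have h𝒰S : 𝒰 ⊆ 𝒮 := Set.subset_union_left
  -- monotonicity and subadditivity of ρ on the algebra
  have hmono : ∀ A B : Set X, GSetAlg G 𝒮 A → GSetAlg G 𝒮 B → A ⊆ B → ρ A ≤ ρ B := by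
    intro A B hA hB hAB
    have hBA : GSetAlg G 𝒮 (B \ A) := hB.diff hA
    have : ρ B = ρ A + ρ (B \ A) := by
      rw [← hρadd A (B \ A) hA hBA disjoint_sdiff_self_right, Set.union_diff_cancel hAB]
    rw [this]
    exact le_self_add
  have hsubadd : ∀ A B : Set X, GSetAlg G 𝒮 A → GSetAlg G 𝒮 B → ρ (A ∪ B) ≤ ρ A + ρ B := by
    intro A B hA hB
    have h1 : A ∪ B = A ∪ (B \ A) := (Set.union_diff_self).symm
    rw [h1, hρadd _ _ hA (hB.diff hA) disjoint_sdiff_self_right]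
    exact add_le_add_right (hmono _ _ (hB.diff hA) hB Set.diff_subset) _
  -- the "outer content" of a set
  set idx : Set X → Set (Set X) := fun C => {U | GSetAlg G 𝒮 U ∧ IsOpen U ∧ C ⊆ U} with hidx
  set lam : Set X → ℝ≥0∞ := fun C => sInf (ρ '' idx C) with hlam
  have hunivmem : ∀ C : Set X, Set.univ ∈ idx C :=
    fun C => ⟨GSetAlg.univ, isOpen_univ, Set.subset_univ C⟩
  have hlam_le : ∀ C U, U ∈ idx C → lam C ≤ ρ U :=
    fun C U hU => sInf_le ⟨U, hU, rfl⟩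
  have hle_lam : ∀ (C : Set X) (a : ℝ≥0∞), (∀ U ∈ idx C, a ≤ ρ U) → a ≤ lam C := by
    intro C a h
    refine le_sInf ?_
    rintro b ⟨U, hU, rfl⟩
    exact h U hU
  have hlam1 : ∀ C : Set X, lam C ≤ 1 :=
    fun C => (hlam_le C _ (hunivmem C)).trans (le_of_eq hρ1)
  have hlam_ne_top : ∀ C : Set X, lam C ≠ ⊤ :=
    fun C => ((hlam1 C).trans_lt ENNReal.one_lt_top).ne
  have hlam_mono : ∀ C D : Set X, C ⊆ D → lam C ≤ lam D := by
    intro C D h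
    refine hle_lam _ _ fun U hU => hlam_le C U ⟨hU.1, hU.2.1, h.trans hU.2.2⟩
  have hlam_subadd : ∀ C D : Set X, lam (C ∪ D) ≤ lam C + lam D := by
    intro C D
    refine le_sInf_add_sInf' ?_
    rintro x ⟨U, hU, rfl⟩ y ⟨V, hV, rfl⟩
    refine (hlam_le _ (U ∪ V) ⟨GSetAlg.union _ _ hU.1 hV.1, hU.2.1.union hV.2.1,
      Set.union_subset_union hU.2.2 hV.2.2⟩).trans (hsubadd U V hU.1 hV.1)
  have hlam_disj : ∀ C D : Set X, IsCompact C → IsCompact D → Disjoint C D →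
      lam C + lam D ≤ lam (C ∪ D) := by
    intro C D hCc hDc hCD
    obtain ⟨V₁, V₂, hV₁, hV₂, hCV₁, hDV₂, hV₁₂⟩ :=
      SeparatedNhds.of_isCompact_isCompact_isClosed hCc hDc hDc.isClosed hCD
    obtain ⟨W₁, hW₁alg, hW₁o, hCW₁, hW₁V⟩ := exists_gsetalg_open (G := G) h𝒰b h𝒰S hCc hV₁ hCV₁
    obtain ⟨W₂, hW₂alg, hW₂o, hDW₂, hW₂V⟩ := exists_gsetalg_open (G := G) h𝒰b h𝒰S hDc hV₂ hDV₂
    refine hle_lam _ _ ?_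
    rintro U ⟨hUalg, hUo, hCDU⟩
    have h1 : U ∩ W₁ ∈ idx C := ⟨hUalg.inter hW₁alg, hUo.inter hW₁o,
      Set.subset_inter (Set.subset_union_left.trans hCDU) hCW₁⟩
    have h2 : U ∩ W₂ ∈ idx D := ⟨hUalg.inter hW₂alg, hUo.inter hW₂o,
      Set.subset_inter (Set.subset_union_right.trans hCDU) hDW₂⟩
    have hdisj : Disjoint (U ∩ W₁) (U ∩ W₂) :=
      hV₁₂.mono (Set.inter_subset_right.trans hW₁V) (Set.inter_subset_right.trans hW₂V)
    calc lam C + lam D ≤ ρ (U ∩ W₁) + ρ (U ∩ W₂) :=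
          add_le_add (hlam_le _ _ h1) (hlam_le _ _ h2)
      _ = ρ ((U ∩ W₁) ∪ (U ∩ W₂)) :=
          (hρadd _ _ (hUalg.inter hW₁alg) (hUalg.inter hW₂alg) hdisj).symm
      _ ≤ ρ U := hmono _ _ ((hUalg.inter hW₁alg).union _ _ (hUalg.inter hW₂alg))
          hUalg (by intro x hx; rcases hx with h | h <;> exact h.1)
  have hlam_smul_le : ∀ (g : G) (C : Set X), lam (g • C) ≤ lam C := by
    intro g C
    refine le_sInf ?_
    rintro b ⟨U, ⟨hUalg, hUo, hCU⟩, rfl⟩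
    have hmem : g • U ∈ idx (g • C) :=
      ⟨GSetAlg.smul g U hUalg, hUo.smul g, Set.smul_set_mono hCU⟩
    exact (hlam_le _ _ hmem).trans_eq (hρinv g U hUalg)
  have hlam_inv : ∀ (g : G) (C : Set X), lam (g • C) = lam C := by
    intro g C
    refine le_antisymm (hlam_smul_le g C) ?_
    have := hlam_smul_le g⁻¹ (g • C)
    rwa [inv_smul_smul] at this
  have hlamK : ρ K ≤ lam K :=
    hle_lam K _ fun U hU => hmono K U hKalg hU.1 hU.2.2
  -- the content
  set c : MeasureTheory.Content X :=
    { toFun := fun C => (lam C.1).toNNReal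
      mono' := fun C D h => ENNReal.toNNReal_mono (hlam_ne_top _) (hlam_mono _ _ h)
      sup_disjoint' := by
        intro C D hdis _ _
        show (lam ((C ⊔ D : TopologicalSpace.Compacts X) : Set X)).toNNReal =
          (lam (C : Set X)).toNNReal + (lam (D : Set X)).toNNReal
        have h1 : lam ((C ⊔ D : TopologicalSpace.Compacts X) : Set X) =
            lam (C : Set X) + lam (D : Set X) := by
          rw [TopologicalSpace.Compacts.coe_sup]
          exact le_antisymm (hlam_subadd _ _) (hlam_disj _ _ C.2 D.2 hdis)
        rw [h1, ENNReal.toNNReal_add (hlam_ne_top _) (hlam_ne_top _)]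
      sup_le' := by
        intro C D
        show (lam ((C ⊔ D : TopologicalSpace.Compacts X) : Set X)).toNNReal ≤
          (lam (C : Set X)).toNNReal + (lam (D : Set X)).toNNReal
        rw [← ENNReal.toNNReal_add (hlam_ne_top _) (hlam_ne_top _)]
        refine ENNReal.toNNReal_mono (ENNReal.add_ne_top.2 ⟨hlam_ne_top _, hlam_ne_top _⟩) ?_
        rw [TopologicalSpace.Compacts.coe_sup]
        exact hlam_subadd _ _ } with hc
  have hc_coe : ∀ C : TopologicalSpace.Compacts X, (c C : ℝ≥0∞) = lam C.1 :=
    fun C => ENNReal.coe_toNNReal (hlam_ne_top _)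
  set ν : MeasureTheory.Measure X := c.measure with hν
  -- total mass bounds
  have hν_univ_le : ν Set.univ ≤ 1 := by
    rw [hν, c.measure_apply MeasurableSet.univ, c.outerMeasure_of_isOpen _ isOpen_univ,
      MeasureTheory.Content.innerContent]
    exact iSup₂_le fun C _ => (hc_coe C).le.trans (hlam1 _)
  have hν_ne_top : ν Set.univ ≠ ⊤ := (hν_univ_le.trans_lt ENNReal.one_lt_top).ne
  have hνK : ρ K ≤ ν K := by
    rw [hν, c.measure_apply hK.isClosed.measurableSet]
    refine le_trans ?_ (c.le_outerMeasure_compacts ⟨K, hK⟩)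
    rw [hc_coe]
    exact hlamK
  have hν_pos : 0 < ν Set.univ :=
    lt_of_lt_of_le hρK (hνK.trans (MeasureTheory.measure_mono (Set.subset_univ K)))
  -- invariance of ν
  have hc_map : ∀ (g : G) (C : TopologicalSpace.Compacts X),
      c (C.map _ (Homeomorph.smul g).continuous) = c C := by
    intro g C
    rw [hc_coe, hc_coe]
    have himg : ⇑(Homeomorph.smul g : X ≃ₜ X) '' C.1 = g • C.1 := rfl
    show lam (⇑(Homeomorph.smul g : X ≃ₜ X) '' C.1) = lam C.1
    rw [himg, hlam_inv]
  have hν_inv : ∀ (g : G) (A : Set X), ν (g • A) = ν A := by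
    intro g A
    have hme : MeasurableEmbedding (⇑(Homeomorph.smul g⁻¹ : X ≃ₜ X)) :=
      (Homeomorph.smul g⁻¹).measurableEmbedding
    have hmp : MeasureTheory.MeasurePreserving (⇑(Homeomorph.smul g⁻¹ : X ≃ₜ X)) ν ν := by
      refine ⟨(Homeomorph.smul g⁻¹ : X ≃ₜ X).continuous.measurable, ?_⟩
      ext s hs
      rw [MeasureTheory.Measure.map_apply
        (Homeomorph.smul g⁻¹ : X ≃ₜ X).continuous.measurable hs, hν,
        c.measure_apply ((Homeomorph.smul g⁻¹ : X ≃ₜ X).continuous.measurable hs),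
        c.measure_apply hs, c.outerMeasure_preimage (Homeomorph.smul g⁻¹) (fun C => hc_map g⁻¹ C) s]
    have hAeq : g • A = (⇑(Homeomorph.smul g⁻¹ : X ≃ₜ X)) ⁻¹' A := by
      show g • A = (fun x : X => g⁻¹ • x) ⁻¹' A
      rw [Set.preimage_smul, inv_inv]
    rw [hAeq, hmp.measure_preimage_emb hme]
  -- normalize
  refine ⟨(ν Set.univ)⁻¹ • ν, ⟨?_⟩, ?_⟩
  · rw [MeasureTheory.Measure.smul_apply, smul_eq_mul,
      ENNReal.inv_mul_cancel hν_pos.ne' hν_ne_top]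
  · intro g S
    rw [MeasureTheory.Measure.smul_apply, MeasureTheory.Measure.smul_apply, hν_inv g S]
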